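/- Let α be the real root of λ³ - λ² - λ - 1 = 0. The characteristic polynomial P(λ) = λ⁴ + ((2α³ - α² - 2α - 1)/α⁶)·λ² + 1/α⁶ of the linearization of the system x_{n+1} = (y_n·x_{n-1} + x_{n-1} + 1)/(y_n·x_{n-1}), y_{n+1} = (x_n·y_{n-1} + y_{n-1} + 1)/(x_n·y_{n-1}) at the equilibrium (α, α) has all its (complex) roots of modulus strictly less than 1. -/

import Mathlib

theorem stmt16 (α : ℝ) (hα : α ^ 3 - α ^ 2 - α - 1 = 0) :
    ∀ z : ℂ, z ^ 4 + (((2 * α ^ 3 - α ^ 2 - 2 * α - 1 : ℝ) : ℂ) / (α : ℂ) ^ 6) * z ^ 2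
      + 1 / (α : ℂ) ^ 6 = 0 → ‖z‖ < 1 := by
  intro z hz
  have hα1 : (1:ℝ) < α := by
    nlinarith [sq_nonneg (α - 1), sq_nonneg (α + 1), sq_nonneg α, sq_nonneg (α^2 - 1)]
  have hα0 : (0:ℝ) < α := by linarith
  have hαne : (α:ℂ) ≠ 0 := by
    exact_mod_cast (ne_of_gt hα0 : (α:ℝ) ≠ 0)
  set B : ℂ := (((2 * α ^ 3 - α ^ 2 - 2 * α - 1 : ℝ) : ℂ) / (α : ℂ) ^ 6) with hB
  set C : ℂ := 1 / (α : ℂ) ^ 6 with hC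
  set w : ℂ := z ^ 2 with hw
  have hz' : w ^ 2 + B * w + C = 0 := by
    rw [hw]; ring_nf; rw [hw] at hz; linear_combination hz
  have hconj : (starRingEnd ℂ) w ^ 2 + B * (starRingEnd ℂ) w + C = 0 := by
    have h := congrArg (starRingEnd ℂ) hz'
    simp only [hB, hC, map_add, map_mul, map_pow, map_div₀, map_one, map_zero,
      Complex.conj_ofReal] at h
    exact h
  have key : w * (starRingEnd ℂ) w = C := by
    by_cases hwr : (starRingEnd ℂ) w = w
    · exfalso
      have hre : w = ((w.re : ℝ) : ℂ) := (Complex.conj_eq_iff_re.mp hwr).symm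
      set x : ℝ := w.re with hx
      have hre2 : (x:ℂ) ^ 2 + B * (x:ℂ) + C = 0 := by rw [← hre]; exact hz'
      have hreal : x ^ 2 + (2 * α ^ 3 - α ^ 2 - 2 * α - 1) / α ^ 6 * x + 1 / α ^ 6 = 0 := by
        have h0 : (((x ^ 2 + (2 * α ^ 3 - α ^ 2 - 2 * α - 1) / α ^ 6 * x + 1 / α ^ 6 : ℝ)) : ℂ)
            = 0 := by
          rw [hB, hC] at hre2
          push_cast at hre2 ⊢
          linear_combination hre2
        exact_mod_cast h0
      have hα6 : (0:ℝ) < α ^ 6 := by positivity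
      field_simp at hreal
      have hreal2 : x ^ 2 * α ^ 6 + (α ^ 2 + 1) * x + 1 = 0 := by
        linear_combination hreal - 2 * x * hα
      have hreal3 : 4 * α ^ 6 * (x ^ 2 * α ^ 6) + 4 * α ^ 6 * ((α ^ 2 + 1) * x) + 4 * α ^ 6 = 0 := by
        linear_combination 4 * α ^ 6 * hreal2
      have hdisc : (α ^ 2 + 1) ^ 2 < 4 * α ^ 6 := by
        nlinarith [hα1, sq_nonneg (α ^ 2 - 1), sq_nonneg (α - 1), mul_pos hα0 hα0]
      nlinarith [hreal3, hdisc, sq_nonneg (2 * x * α ^ 6 + α ^ 2 + 1)]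
    · have hsub : (w - (starRingEnd ℂ) w) * (w + (starRingEnd ℂ) w + B) = 0 := by
        linear_combination hz' - hconj
      rcases mul_eq_zero.mp hsub with h | h
      · exact absurd (sub_eq_zero.mp h).symm hwr
      · have hu : (starRingEnd ℂ) w = -B - w := by linear_combination h
        rw [hu]
        linear_combination -hz'
  have hns : Complex.normSq w = 1 / α ^ 6 := by
    have h := key
    rw [Complex.mul_conj, hC] at h
    exact_mod_cast h
  have habs4 : ‖z‖ ^ 4 = 1 / α ^ 6 := by
    have h : ‖z‖ ^ 4 = Complex.normSq w := by
      rw [hw, Complex.normSq_eq_norm_sq, norm_pow]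
      ring
    rw [h, hns]
  have hlt : ‖z‖ ^ 4 < 1 := by
    rw [habs4, div_lt_one (by positivity)]
    nlinarith [hα1]
  by_contra hge
  push_neg at hge
  have h1 : (1:ℝ) ≤ ‖z‖ ^ 4 := one_le_pow₀ hge
  linarith
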